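/- Let 𝒳 be a finite set; let P^f, P^R, and P^{f⁰} be probability distributions on 𝒳 such that P^f satisfies overlap with respect to both P^R and P^{f⁰}; let g : 𝒳 → ℝ and let ĝ : 𝒳 → ℝ be an arbitrary function. Let (Ω, μ) be a probability space; for i = 1,…,n let X_i : Ω → 𝒳 have law P^R and Y_i : Ω → ℝ be integrable with ∫ Y_i·1{X_i = x} dμ = g(x)·P^R(x) for all x; for j = 1,…,m let X̃_j : Ω → 𝒳 have law P^{f⁰}. Then the doubly robust estimator V̂_DR = (1/n) ∑_{i=1}^n (P^f(X_i)/P^R(X_i))·(Y_i − ĝ(X_i)) + (1/m) ∑_{j=1}^m (P^f(X̃_j)/P^{f⁰}(X̃_j))·ĝ(X̃_j) satisfies ∫ V̂_DR dμ = ∑_{x∈𝒳} P^f(x)·g(x) = V(f). (Theorem 2, case 1: unbiasedness of DR-CPO when the randomization distribution P^R is correctly specified, regardless of whether the outcome model ĝ is correct.) -/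

import Mathlib

open MeasureTheory Finset

lemma drcpo_intmul {𝒳 : Type*} [Fintype 𝒳] [MeasurableSpace 𝒳] [MeasurableSingletonClass 𝒳]
    {Ω : Type*} [MeasurableSpace Ω] (μ : Measure Ω)
    (X : Ω → 𝒳) (hX : Measurable X) (Y : Ω → ℝ) (hY : Integrable Y μ) (h : 𝒳 → ℝ) :
    Integrable (fun ω => h (X ω) * Y ω) μ := by
  refine hY.bdd_mul (c := ∑ x, ‖h x‖) ((measurable_of_countable h).comp hX).aestronglyMeasurable
    (Filter.Eventually.of_forall fun ω => ?_)
  exact Finset.single_le_sum (fun x _ => norm_nonneg _) (Finset.mem_univ (X ω))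

lemma drcpo_key {𝒳 : Type*} [Fintype 𝒳] [MeasurableSpace 𝒳] [MeasurableSingletonClass 𝒳]
    {Ω : Type*} [MeasurableSpace Ω] (μ : Measure Ω)
    (X : Ω → 𝒳) (hX : Measurable X) (Y : Ω → ℝ) (hY : Integrable Y μ) (h : 𝒳 → ℝ) :
    ∫ ω, h (X ω) * Y ω ∂μ = ∑ x, h x * ∫ ω in {ω | X ω = x}, Y ω ∂μ := by
  have hmeas : ∀ x : 𝒳, MeasurableSet {ω | X ω = x} := fun x => hX (measurableSet_singleton x)
  have hpt : ∀ ω, h (X ω) * Y ω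
      = ∑ x, ({ω | X ω = x}).indicator (fun ω => h x * Y ω) ω := by
    intro ω
    rw [Finset.sum_eq_single (X ω)]
    · rw [Set.indicator_of_mem (by simp : ω ∈ {ω' | X ω' = X ω})]
    · intro b _ hb
      exact Set.indicator_of_notMem (by simpa using (Ne.symm hb)) _
    · intro hx; exact absurd (Finset.mem_univ _) hx
  calc ∫ ω, h (X ω) * Y ω ∂μ
      = ∫ ω, ∑ x, ({ω | X ω = x}).indicator (fun ω => h x * Y ω) ω ∂μ := by
        exact integral_congr_ae (Filter.Eventually.of_forall hpt)
    _ = ∑ x, ∫ ω, ({ω | X ω = x}).indicator (fun ω => h x * Y ω) ω ∂μ := by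
        exact integral_finset_sum _ fun x _ => ((hY.const_mul (h x)).indicator (hmeas x))
    _ = ∑ x, h x * ∫ ω in {ω | X ω = x}, Y ω ∂μ := by
        refine Finset.sum_congr rfl fun x _ => ?_
        rw [integral_indicator (hmeas x), MeasureTheory.integral_const_mul]

/-- **Theorem 2, case 1.** Unbiasedness of the DR-CPO estimator when the randomization
distribution `PR` is correctly specified, regardless of whether the outcome model `ĝ`
is correct:
`∫ [(1/n) ∑ i, (Pf(Xᵢ)/PR(Xᵢ))(Yᵢ − ĝ(Xᵢ)) + (1/m) ∑ j, (Pf(X̃ⱼ)/Pf0(X̃ⱼ)) ĝ(X̃ⱼ)] dμ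
  = ∑ x, Pf x * g x = V(f)`. -/
theorem dr_cpo_unbiased_known_PR {𝒳 : Type*} [Fintype 𝒳]
    [MeasurableSpace 𝒳] [MeasurableSingletonClass 𝒳]
    (Pf PR Pf0 : 𝒳 → ℝ)
    (hPf_nonneg : ∀ x, 0 ≤ Pf x) (hPf_sum : ∑ x, Pf x = 1)
    (hPR_nonneg : ∀ x, 0 ≤ PR x) (hPR_sum : ∑ x, PR x = 1)
    (hPf0_nonneg : ∀ x, 0 ≤ Pf0 x) (hPf0_sum : ∑ x, Pf0 x = 1)
    (h_overlap_R : ∀ x, PR x = 0 → Pf x = 0)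
    (h_overlap_0 : ∀ x, Pf0 x = 0 → Pf x = 0)
    (g ghat : 𝒳 → ℝ)
    {Ω : Type*} [MeasurableSpace Ω] (μ : Measure Ω) [IsProbabilityMeasure μ]
    (n m : ℕ) (hn : 0 < n) (hm : 0 < m)
    (X : Fin n → Ω → 𝒳) (hX : ∀ i, Measurable (X i))
    (hlaw : ∀ i x, (μ {ω | X i ω = x}).toReal = PR x)
    (Y : Fin n → Ω → ℝ) (hY : ∀ i, Integrable (Y i) μ)
    (hcond : ∀ i x, ∫ ω in {ω | X i ω = x}, Y i ω ∂μ = g x * PR x)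
    (Xt : Fin m → Ω → 𝒳) (hXt : ∀ j, Measurable (Xt j))
    (hlawt : ∀ j x, (μ {ω | Xt j ω = x}).toReal = Pf0 x) :
    ∫ ω, ((1 / (n : ℝ)) * ∑ i, (Pf (X i ω) / PR (X i ω)) * (Y i ω - ghat (X i ω))
        + (1 / (m : ℝ)) * ∑ j, (Pf (Xt j ω) / Pf0 (Xt j ω)) * ghat (Xt j ω)) ∂μ
      = ∑ x, Pf x * g x := by
  have hgint : ∀ i, Integrable (fun ω => ghat (X i ω)) μ := fun i => by
    simpa using drcpo_intmul μ (X i) (hX i) (fun _ => (1:ℝ)) (integrable_const 1) ghat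
  have hY' : ∀ i, Integrable (fun ω => Y i ω - ghat (X i ω)) μ :=
    fun i => (hY i).sub (hgint i)
  have hA : ∀ i, Integrable (fun ω => (Pf (X i ω) / PR (X i ω)) * (Y i ω - ghat (X i ω))) μ :=
    fun i => drcpo_intmul μ (X i) (hX i) _ (hY' i) (fun x => Pf x / PR x)
  have hB : ∀ j, Integrable (fun ω => (Pf (Xt j ω) / Pf0 (Xt j ω)) * ghat (Xt j ω)) μ :=
    fun j => by
      simpa using drcpo_intmul μ (Xt j) (hXt j) (fun _ => (1:ℝ)) (integrable_const 1)
        (fun x => (Pf x / Pf0 x) * ghat x)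
  have hIA : ∀ i, ∫ ω, (Pf (X i ω) / PR (X i ω)) * (Y i ω - ghat (X i ω)) ∂μ
      = ∑ x, Pf x * (g x - ghat x) := by
    intro i
    rw [drcpo_key μ (X i) (hX i) _ (hY' i) (fun x => Pf x / PR x)]
    refine Finset.sum_congr rfl fun x _ => ?_
    have hmx : MeasurableSet {ω | X i ω = x} := hX i (measurableSet_singleton x)
    have hgset : ∫ ω in {ω | X i ω = x}, ghat (X i ω) ∂μ = ghat x * PR x := by
      have : ∫ ω in {ω | X i ω = x}, ghat (X i ω) ∂μ
          = ∫ _ω in {ω | X i ω = x}, ghat x ∂μ := by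
        refine setIntegral_congr_fun hmx fun ω hω => ?_
        simp only [Set.mem_setOf_eq] at hω
        rw [hω]
      rw [this, setIntegral_const, measureReal_def, hlaw i x, smul_eq_mul, mul_comm]
    have hset : ∫ ω in {ω | X i ω = x}, (Y i ω - ghat (X i ω)) ∂μ
        = g x * PR x - ghat x * PR x := by
      rw [integral_sub ((hY i).integrableOn) ((hgint i).integrableOn), hcond i x, hgset]
    rw [hset]
    by_cases hzero : PR x = 0
    · simp [hzero, h_overlap_R x hzero]
    · field_simp
  have hIB : ∀ j, ∫ ω, (Pf (Xt j ω) / Pf0 (Xt j ω)) * ghat (Xt j ω) ∂μ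
      = ∑ x, Pf x * ghat x := by
    intro j
    have hk := drcpo_key μ (Xt j) (hXt j) (fun _ => (1:ℝ)) (integrable_const 1)
      (fun x => (Pf x / Pf0 x) * ghat x)
    simp only [mul_one] at hk
    rw [hk]
    refine Finset.sum_congr rfl fun x _ => ?_
    rw [setIntegral_const, measureReal_def, hlawt j x, smul_eq_mul, mul_one]
    by_cases hzero : Pf0 x = 0
    · simp [hzero, h_overlap_0 x hzero]
    · field_simp
  have hsplit : ∫ ω, ((1 / (n : ℝ)) * ∑ i, (Pf (X i ω) / PR (X i ω)) * (Y i ω - ghat (X i ω))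
        + (1 / (m : ℝ)) * ∑ j, (Pf (Xt j ω) / Pf0 (Xt j ω)) * ghat (Xt j ω)) ∂μ
      = (1 / (n : ℝ)) * ∑ i, (∫ ω, (Pf (X i ω) / PR (X i ω)) * (Y i ω - ghat (X i ω)) ∂μ)
        + (1 / (m : ℝ)) * ∑ j, ∫ ω, (Pf (Xt j ω) / Pf0 (Xt j ω)) * ghat (Xt j ω) ∂μ := by
    rw [integral_add ((integrable_finset_sum _ fun i _ => hA i).const_mul _)
      ((integrable_finset_sum _ fun j _ => hB j).const_mul _),
      MeasureTheory.integral_const_mul, MeasureTheory.integral_const_mul,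
      integral_finset_sum _ (fun i _ => hA i), integral_finset_sum _ (fun j _ => hB j)]
  rw [hsplit]
  simp only [hIA, hIB, Finset.sum_const, card_univ, Fintype.card_fin, nsmul_eq_mul]
  have hn' : (n:ℝ) ≠ 0 := Nat.cast_ne_zero.mpr hn.ne'
  have hm' : (m:ℝ) ≠ 0 := Nat.cast_ne_zero.mpr hm.ne'
  rw [one_div, one_div, inv_mul_cancel_left₀ hn', inv_mul_cancel_left₀ hm',
    ← Finset.sum_add_distrib]
  exact Finset.sum_congr rfl fun x _ => by ring
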